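/- Let N₀ = ((B·A₀·P_{(1 3 2)})ᵀ)⁻¹·Bᵀ and N₁ = ((B·A₁·P_{(2 3)})ᵀ)⁻¹·Bᵀ. Then N₀ = ![![0,1,0],![1,0,1],![0,−1,−1]] and N₁ = ![![1,0,0],![0,1,1],![−1,0,−1]], and for every (x,y) ∈ ℝ² with 0 ≤ y ≤ x ≤ 1: if x + y ≥ 1 then π((1,x,y)·N₀) = ((1−y)/x, (x−y)/x), and if x + y ≤ 1 then π((1,x,y)·N₁) = (x/(1−y), (x−y)/(1−y)). Hence the TRIP map T_{(e,(1 3 2),(2 3))} is equal to the Mönkemeyer map, which sends (x,y) to ((1−y)/x, (x−y)/x) when x+y ≥ 1 and to (x/(1−y), (x−y)/(1−y)) when x+y ≤ 1. -/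

import Mathlib

open Matrix

noncomputable section

def A0 : Matrix (Fin 3) (Fin 3) ℝ := !![0,0,1; 1,0,0; 0,1,1]
def A1 : Matrix (Fin 3) (Fin 3) ℝ := !![1,0,1; 0,1,0; 0,0,1]
def Bm : Matrix (Fin 3) (Fin 3) ℝ := !![1,1,1; 0,1,1; 0,0,1]
/-- the permutation matrix of (1 3 2) -/
def P132 : Matrix (Fin 3) (Fin 3) ℝ := !![0,0,1; 1,0,0; 0,1,0]
/-- the permutation matrix of (2 3) -/
def P23 : Matrix (Fin 3) (Fin 3) ℝ := !![1,0,0; 0,0,1; 0,1,0]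

/-- the projection `π(x₀,x₁,x₂) = (x₁/x₀, x₂/x₀)` -/
def proj (v : Fin 3 → ℝ) : ℝ × ℝ := (v 1 / v 0, v 2 / v 0)

/-- The TRIP map `T_{(e,(1 3 2),(2 3))}` equals the Mönkemeyer map:
`N₀ = ((B·A₀·P_{(1 3 2)})ᵀ)⁻¹·Bᵀ` and `N₁ = ((B·A₁·P_{(2 3)})ᵀ)⁻¹·Bᵀ` are the stated
matrices, and on the triangle `{0 ≤ y ≤ x ≤ 1}` they induce the two branches of the
Mönkemeyer map. -/
theorem trip_eq_monkemeyer :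
    ((Bm * A0 * P132)ᵀ)⁻¹ * Bmᵀ = !![0,1,0; 1,0,1; 0,-1,-1] ∧
    ((Bm * A1 * P23)ᵀ)⁻¹ * Bmᵀ = !![1,0,0; 0,1,1; -1,0,-1] ∧
    ∀ x y : ℝ, 0 ≤ y → y ≤ x → x ≤ 1 →
      (1 ≤ x + y →
        proj (Matrix.vecMul ![1, x, y] (((Bm * A0 * P132)ᵀ)⁻¹ * Bmᵀ)) =
          ((1 - y) / x, (x - y) / x)) ∧
      (x + y ≤ 1 →
        proj (Matrix.vecMul ![1, x, y] (((Bm * A1 * P23)ᵀ)⁻¹ * Bmᵀ)) =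
          (x / (1 - y), (x - y) / (1 - y))) := by
  have hX0 : (Bm * A0 * P132)ᵀ = !![1,1,1; 2,1,1; 1,1,0] := by
    ext i j
    fin_cases i <;> fin_cases j <;>
      norm_num [Bm, A0, P132, Matrix.mul_apply, Fin.sum_univ_three, Matrix.vecHead,
        Matrix.vecTail, Matrix.cons_val_two]
  have hX1 : (Bm * A1 * P23)ᵀ = !![1,0,0; 2,1,1; 1,1,0] := by
    ext i j
    fin_cases i <;> fin_cases j <;>
      norm_num [Bm, A1, P23, Matrix.mul_apply, Fin.sum_univ_three, Matrix.vecHead,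
        Matrix.vecTail, Matrix.cons_val_two]
  have hI0 : ((Bm * A0 * P132)ᵀ)⁻¹ = !![-1,1,0; 1,-1,1; 1,0,-1] := by
    rw [hX0]
    apply Matrix.inv_eq_right_inv
    ext i j
    fin_cases i <;> fin_cases j <;>
      norm_num [Matrix.mul_apply, Fin.sum_univ_three, Matrix.one_apply, Matrix.vecHead,
        Matrix.vecTail, Fin.ext_iff, Matrix.cons_val_two]
  have hI1 : ((Bm * A1 * P23)ᵀ)⁻¹ = !![1,0,0; -1,0,1; -1,1,-1] := by
    rw [hX1]
    apply Matrix.inv_eq_right_inv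
    ext i j
    fin_cases i <;> fin_cases j <;>
      norm_num [Matrix.mul_apply, Fin.sum_univ_three, Matrix.one_apply, Matrix.vecHead,
        Matrix.vecTail, Fin.ext_iff, Matrix.cons_val_two]
  have hN0 : ((Bm * A0 * P132)ᵀ)⁻¹ * Bmᵀ = !![0,1,0; 1,0,1; 0,-1,-1] := by
    rw [hI0]
    ext i j
    fin_cases i <;> fin_cases j <;>
      norm_num [Bm, Matrix.mul_apply, Fin.sum_univ_three, Matrix.vecHead, Matrix.vecTail, Matrix.cons_val_two]
  have hN1 : ((Bm * A1 * P23)ᵀ)⁻¹ * Bmᵀ = !![1,0,0; 0,1,1; -1,0,-1] := by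
    rw [hI1]
    ext i j
    fin_cases i <;> fin_cases j <;>
      norm_num [Bm, Matrix.mul_apply, Fin.sum_univ_three, Matrix.vecHead, Matrix.vecTail, Matrix.cons_val_two]
  refine ⟨hN0, hN1, fun x y hy hyx hx1 => ⟨fun hxy => ?_, fun hxy => ?_⟩⟩
  · rw [hN0]
    have hx : 0 < x := by linarith
    simp [proj, Matrix.vecMul, dotProduct, Fin.sum_univ_three]
    constructor <;> ring_nf
  · rw [hN1]
    have hy1 : y < 1 := by linarith
    simp [proj, Matrix.vecMul, dotProduct, Fin.sum_univ_three]
    constructor <;> ring_nf
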